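/- For every α ∈ [1,2] and all x, y ∈ [0,1]: f_α((x+y)/2) ≤ (f_α(x) + f_α(y))/2 + |x - y|^α. -/

import Mathlib

set_option maxHeartbeats 1000000

/-- The tent map `φ(x) = 2 inf{|x-n| : n ∈ ℤ}`. -/
noncomputable def tent (x : ℝ) : ℝ := 2 * ⨅ n : ℤ, |x - (n:ℝ)|

/-- `f_α(x) = ∑_{j=0}^∞ 2^{-αj} φ(2^j x)`. -/
noncomputable def takagi (α x : ℝ) : ℝ :=
  ∑' j : ℕ, (1 / (2:ℝ) ^ (α * (j:ℝ))) * tent ((2:ℝ) ^ (j:ℕ) * x)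

/-- distance to the nearest integer -/
noncomputable def di (x : ℝ) : ℝ := |x - round x|

lemma di_nonneg (x : ℝ) : 0 ≤ di x := abs_nonneg _

lemma di_le_half (x : ℝ) : di x ≤ 1/2 := abs_sub_round x

lemma di_min (x : ℝ) (n : ℤ) : di x ≤ |x - n| := by
  rcases eq_or_ne n (round x) with h | h
  · simp [di, h]
  · have h1 : (1:ℝ) ≤ |(round x : ℝ) - n| := by
      have : round x - n ≠ 0 := sub_ne_zero.mpr (Ne.symm h)
      calc (1:ℝ) = ((1:ℤ):ℝ) := by norm_num
      _ ≤ |((round x - n : ℤ) : ℝ)| := by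
        rw [← Int.cast_abs]; exact_mod_cast Int.one_le_abs this
      _ = |(round x : ℝ) - n| := by push_cast; ring_nf
    have h2 : |(round x:ℝ) - n| ≤ |x - round x| + |x - n| := by
      have := abs_sub_abs_le_abs_sub ((round x:ℝ) - x) ((n:ℝ) - x)
      calc |(round x:ℝ) - n| = |((round x:ℝ) - x) - ((n:ℝ) - x)| := by ring_nf
      _ ≤ |(round x:ℝ) - x| + |(n:ℝ) - x| := abs_sub _ _
      _ = |x - round x| + |x - n| := by rw [abs_sub_comm, abs_sub_comm (n:ℝ)]
    have := di_le_half x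
    unfold di at *
    linarith

lemma di_eq_of (x : ℝ) (k : ℤ) (h : |x - k| ≤ 1/2) : di x = |x - k| := by
  refine le_antisymm (di_min x k) ?_
  rcases eq_or_ne (round x) k with h' | h'
  · simp [di, h']
  · have h1 : (1:ℝ) ≤ |(k:ℝ) - round x| := by
      have : k - round x ≠ 0 := sub_ne_zero.mpr (Ne.symm h')
      calc (1:ℝ) = ((1:ℤ):ℝ) := by norm_num
      _ ≤ |((k - round x : ℤ) : ℝ)| := by
        rw [← Int.cast_abs]; exact_mod_cast Int.one_le_abs this
      _ = |(k:ℝ) - round x| := by push_cast; ring_nf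
    have h2 : |(k:ℝ) - round x| ≤ |x - k| + |x - round x| := by
      calc |(k:ℝ) - round x| = |(x - round x) - (x - k)| := by ring_nf
      _ ≤ |x - round x| + |x - k| := by
        have := abs_sub (x - round x) (x - k); linarith [abs_sub_abs_le_abs_sub (x - round x) (x - k), abs_sub_comm (x - round x) (x - k), abs_add_le (x - round x) (-(x-k))]
      _ = |x - k| + |x - round x| := by ring
    unfold di
    linarith
lemma di_int_add (x : ℝ) (n : ℤ) : di (x + n) = di x := by
  unfold di
  rw [round_add_intCast]
  push_cast
  ring_nf
lemma di_neg (x : ℝ) : di (-x) = di x := by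
  have h1 : di (-x) ≤ di x := by
    have := di_min (-x) (-round x)
    have e : |-x - ((-round x : ℤ):ℝ)| = |x - round x| := by
      push_cast
      rw [show -x - -(round x:ℝ) = -(x - round x) by ring, abs_neg]
    rw [e] at this; exact this
  have h2 : di x ≤ di (-x) := by
    have := di_min x (-round (-x))
    have e : |x - ((-round (-x) : ℤ):ℝ)| = |-x - round (-x)| := by
      push_cast
      rw [show x - -(round (-x):ℝ) = -(-x - (round (-x):ℝ)) by ring, abs_neg]
    rw [e] at this; exact this
  exact le_antisymm h1 h2
lemma tent_eq (x : ℝ) : tent x = 2 * di x := by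
  unfold tent
  congr 1
  refine le_antisymm (ciInf_le ⟨0, by rintro v ⟨n, rfl⟩; exact abs_nonneg _⟩ (round x)) ?_
  exact le_ciInf fun n => di_min x n

lemma di_self (x : ℝ) (h : |x| ≤ 1/2) : di x = |x| := by
  have := di_eq_of x 0 (by simpa using h)
  simpa using this

lemma di_round_rep (x : ℝ) : di x = |x - round x| := rfl

lemma di_add_half (x : ℝ) : di (x + 1/2) = 1/2 - di x := by
  set u := x - round x with hu
  have hx : x = u + round x := by rw [hu]; ring
  have hdi : di x = |u| := di_round_rep x
  have hub : |u| ≤ 1/2 := di_le_half x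
  have h1 : di (x + 1/2) = di (u + 1/2) := by
    rw [hx, show u + (round x:ℝ) + 1/2 = (u + 1/2) + round x by ring, di_int_add]
  rcases le_or_gt u 0 with h | h
  · have := di_self (u + 1/2) (by rw [abs_le] at hub ⊢; constructor <;> linarith)
    rw [h1, this, abs_of_nonneg (by rw [abs_le] at hub; linarith), hdi,
      abs_of_nonpos h]
    ring
  · have h2 : di (u + 1/2) = di (u - 1/2) := by
      rw [show u + 1/2 = (u - 1/2) + (1:ℤ) by push_cast; ring, di_int_add]
    have := di_self (u - 1/2) (by rw [abs_le] at hub ⊢; constructor <;> linarith)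
    rw [h1, h2, this, abs_of_nonpos (by rw [abs_le] at hub; linarith), hdi,
      abs_of_pos h]
    ring

lemma di_double (x : ℝ) : di (2*x) = 2 * min (di x) (1/2 - di x) := by
  set u := x - round x with hu
  have hx : x = u + round x := by rw [hu]; ring
  have hdi : di x = |u| := di_round_rep x
  have hub : |u| ≤ 1/2 := di_le_half x
  have h1 : di (2*x) = di (2*u) := by
    rw [hx, show 2*(u + (round x:ℝ)) = 2*u + ((2*round x : ℤ):ℝ) by push_cast; ring, di_int_add]
  rw [abs_le] at hub
  rcases le_or_gt (|u|) (1/4) with h | h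
  · rw [abs_le] at h
    have := di_self (2*u) (by rw [abs_le]; constructor <;> linarith)
    rw [h1, this, abs_mul, abs_of_nonneg (by norm_num : (0:ℝ) ≤ 2), hdi,
      min_eq_left (by rcases abs_cases u with ⟨e,_⟩|⟨e,_⟩ <;> linarith)]
  · rcases le_or_gt 0 u with h2 | h2
    · have hu4 : 1/4 < u := by rwa [abs_of_nonneg h2] at h
      have h3 : di (2*u) = di (2*u - 1) := by
        have := di_int_add (2*u - 1) 1
        rw [show (2*u - 1) + ((1:ℤ):ℝ) = 2*u by push_cast; ring] at this
        exact this
      have := di_self (2*u - 1) (by rw [abs_le]; constructor <;> linarith)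
      rw [h1, h3, this, abs_of_nonpos (by linarith), hdi, abs_of_nonneg h2,
        min_eq_right (by linarith)]
      ring
    · have hu4 : u < -(1/4) := by rcases abs_cases u with ⟨e,_⟩|⟨e,_⟩ <;> linarith
      have h3 : di (2*u) = di (2*u + 1) := by
        have := di_int_add (2*u + 1) (-1)
        rw [show (2*u + 1) + ((-1:ℤ):ℝ) = 2*u by push_cast; ring] at this
        exact this
      have := di_self (2*u + 1) (by rw [abs_le]; constructor <;> linarith)
      rw [h1, h3, this, abs_of_nonneg (by linarith), hdi, abs_of_neg h2,
        min_eq_right (by linarith)]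
      ring

section
variable {α : ℝ}

lemma tent_nonneg (x : ℝ) : 0 ≤ tent x := by rw [tent_eq]; linarith [di_nonneg x]
lemma tent_le_one (x : ℝ) : tent x ≤ 1 := by rw [tent_eq]; linarith [di_le_half x]
lemma tent_int_add (x : ℝ) (n : ℤ) : tent (x + n) = tent x := by
  rw [tent_eq, tent_eq, di_int_add]

lemma two_rpow_pos : (0:ℝ) < (2:ℝ) ^ (-α) := Real.rpow_pos_of_pos (by norm_num) _

lemma two_rpow_le_half (hα1 : 1 ≤ α) : (2:ℝ) ^ (-α) ≤ 1/2 := by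
  have : (2:ℝ) ^ (-α) ≤ (2:ℝ) ^ (-1 : ℝ) :=
    Real.rpow_le_rpow_of_exponent_le (by norm_num) (by linarith)
  rwa [Real.rpow_neg_one, show ((2:ℝ))⁻¹ = 1/2 by norm_num] at this

lemma weight_eq (j : ℕ) : (1 / (2:ℝ) ^ (α * (j:ℝ))) = ((2:ℝ) ^ (-α)) ^ j := by
  rw [← Real.rpow_natCast ((2:ℝ) ^ (-α)) j, ← Real.rpow_mul (by norm_num : (0:ℝ) ≤ 2)]
  rw [one_div, ← Real.rpow_neg (by norm_num : (0:ℝ) ≤ 2)]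
  ring_nf

lemma term_bound (x : ℝ) (j : ℕ) :
    ((2:ℝ) ^ (-α)) ^ j * tent ((2:ℝ) ^ j * x) ≤ ((2:ℝ) ^ (-α)) ^ j := by
  have h := two_rpow_pos (α := α)
  nlinarith [tent_le_one ((2:ℝ)^j * x), pow_pos h j, pow_nonneg h.le j,
    mul_le_mul_of_nonneg_left (tent_le_one ((2:ℝ)^j * x)) (pow_nonneg h.le j)]

lemma summable_tak (hα1 : 1 ≤ α) (x : ℝ) :
    Summable (fun j : ℕ => ((2:ℝ) ^ (-α)) ^ j * tent ((2:ℝ) ^ j * x)) := by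
  have hr : (0:ℝ) ≤ (2:ℝ)^(-α) := (two_rpow_pos).le
  have hr1 : (2:ℝ)^(-α) < 1 := lt_of_le_of_lt (two_rpow_le_half hα1) (by norm_num)
  refine Summable.of_nonneg_of_le (fun j => ?_) (fun j => term_bound x j) ?_
  · exact mul_nonneg (pow_nonneg hr j) (tent_nonneg _)
  · exact summable_geometric_of_lt_one hr hr1

lemma takagi_def' (x : ℝ) :
    takagi α x = ∑' j : ℕ, ((2:ℝ) ^ (-α)) ^ j * tent ((2:ℝ) ^ j * x) := by
  unfold takagi
  congr 1; funext j; rw [weight_eq]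

lemma takagi_nonneg (hα1 : 1 ≤ α) (x : ℝ) : 0 ≤ takagi α x := by
  rw [takagi_def']
  exact tsum_nonneg fun j => mul_nonneg (pow_nonneg (two_rpow_pos).le j) (tent_nonneg _)

lemma takagi_le_two (hα1 : 1 ≤ α) (x : ℝ) : takagi α x ≤ 2 := by
  rw [takagi_def']
  have hr : (0:ℝ) ≤ (2:ℝ)^(-α) := (two_rpow_pos).le
  have hr1 : (2:ℝ)^(-α) < 1 := lt_of_le_of_lt (two_rpow_le_half hα1) (by norm_num)
  calc ∑' j : ℕ, ((2:ℝ) ^ (-α)) ^ j * tent ((2:ℝ) ^ j * x)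
      ≤ ∑' j : ℕ, ((2:ℝ) ^ (-α)) ^ j :=
        Summable.tsum_le_tsum (fun j => term_bound x j) (summable_tak hα1 x)
          (summable_geometric_of_lt_one hr hr1)
    _ = (1 - (2:ℝ)^(-α))⁻¹ := tsum_geometric_of_lt_one hr hr1
    _ ≤ 2 := by
        rw [inv_le_iff_one_le_mul₀ (by linarith [two_rpow_le_half hα1])]
        linarith [two_rpow_le_half hα1]

lemma takagi_funeq (hα1 : 1 ≤ α) (x : ℝ) :
    takagi α x = tent x + (2:ℝ)^(-α) * takagi α (2*x) := by
  rw [takagi_def', takagi_def']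
  rw [Summable.tsum_eq_zero_add (summable_tak hα1 x)]
  congr 1
  · simp
  · rw [← tsum_mul_left]
    congr 1; funext j
    rw [pow_succ, pow_succ]
    ring_nf

lemma takagi_int_add (x : ℝ) (n : ℤ) : takagi α (x + n) = takagi α x := by
  rw [takagi_def', takagi_def']
  congr 1; funext j
  have : (2:ℝ)^j * (x + n) = (2:ℝ)^j * x + ((2^j * n : ℤ) : ℝ) := by push_cast; ring
  rw [this, tent_int_add]

end

lemma tent_sub_half (x : ℝ) : tent (x - 1/2) = 1 - tent x := by
  have := di_add_half (x - 1/2)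
  rw [show x - 1/2 + 1/2 = x by ring] at this
  rw [tent_eq, tent_eq]
  linarith

lemma takagi_sub_half {α : ℝ} (hα1 : 1 ≤ α) (x : ℝ) :
    takagi α x - takagi α (x - 1/2) = 2 * tent x - 1 := by
  have h1 := takagi_funeq hα1 x
  have h2 := takagi_funeq hα1 (x - 1/2)
  have h3 : takagi α (2*(x - 1/2)) = takagi α (2*x) := by
    rw [show 2*(x - 1/2) = 2*x + ((-1 : ℤ):ℝ) by push_cast; ring, takagi_int_add]
  rw [h3, tent_sub_half] at h2
  linarith

lemma psi0_aux (u h : ℝ) (hu : 0 ≤ u) (hu2 : u ≤ 1/2) (h0 : 0 ≤ h) (h1 : h ≤ 1) :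
    2*u - di (u - h/2) - di (u + h/2)
      = 2 * max 0 (h/2 - (1/2 - u)) - 2 * max 0 (h/2 - u) := by
  have e1 : di (u - h/2) = |u - h/2| := di_self _ (by rw [abs_le]; constructor <;> linarith)
  have key : |u - h/2| = (u - h/2) + 2 * max 0 (h/2 - u) := by
    rcases le_or_gt u (h/2) with hc | hc
    · rw [abs_of_nonpos (by linarith), max_eq_right (by linarith)]; ring
    · rw [abs_of_pos (by linarith), max_eq_left (by linarith)]; ring
  rcases le_or_gt (u + h/2) (1/2) with hc | hc
  · have e2 : di (u + h/2) = u + h/2 := by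
      rw [di_self _ (by rw [abs_le]; constructor <;> linarith)]
      exact abs_of_nonneg (by linarith)
    rw [e1, e2, key, max_eq_left (by linarith : h/2 - (1/2 - u) ≤ 0)]
    ring
  · have e2 : di (u + h/2) = 1 - u - h/2 := by
      have : di (u + h/2) = di (u + h/2 - 1) := by
        have := di_int_add (u + h/2 - 1) 1
        rw [show u + h/2 - 1 + ((1:ℤ):ℝ) = u + h/2 by push_cast; ring] at this
        exact this
      rw [this, di_self _ (by rw [abs_le]; constructor <;> linarith)]
      rw [abs_of_nonpos (by linarith)]; ring
    rw [e1, e2, key, max_eq_right (by linarith : (0:ℝ) ≤ h/2 - (1/2 - u))]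
    ring

lemma psi0 (m h : ℝ) (h0 : 0 ≤ h) (h1 : h ≤ 1) :
    2 * di m - di (m - h/2) - di (m + h/2)
      = 2 * max 0 (h/2 - (1/2 - di m)) - 2 * max 0 (h/2 - di m) := by
  set u := m - round m with hu
  have hm : m = u + round m := by rw [hu]; ring
  have hdm : di m = |u| := rfl
  have hub : |u| ≤ 1/2 := di_le_half m
  have ha : di (m - h/2) = di (u - h/2) := by
    rw [hm, show u + (round m : ℝ) - h/2 = (u - h/2) + round m by ring, di_int_add]
  have hb : di (m + h/2) = di (u + h/2) := by
    rw [hm, show u + (round m : ℝ) + h/2 = (u + h/2) + round m by ring, di_int_add]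
  rw [abs_le] at hub
  rcases le_or_gt 0 u with hc | hc
  · rw [ha, hb, hdm, abs_of_nonneg hc]
    exact psi0_aux u h hc hub.2 h0 h1
  · rw [ha, hb, hdm, abs_of_neg hc]
    have h1' : di (u - h/2) = di (-u + h/2) := by
      rw [← di_neg (u - h/2)]; ring_nf
    have h2' : di (u + h/2) = di (-u - h/2) := by
      rw [← di_neg (u + h/2)]; ring_nf
    rw [h1', h2']
    have := psi0_aux (-u) h (by linarith) (by linarith) h0 h1
    rw [show -u - h/2 = -u - h/2 by ring, show -u + h/2 = -u + h/2 by ring] at this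
    linarith [this]

lemma lemQ {α : ℝ} (hα1 : 1 ≤ α) (hα2 : α ≤ 2) {s : ℝ} (hs0 : 0 ≤ s) (hs1 : s ≤ 1) :
    1 + s ^ α + ((2:ℝ)^α - 2) * s ≤ (1 + s) ^ α := by
  set φ : ℝ → ℝ := fun t => (1+t)^α - t^α with hφ
  have hconc : ConcaveOn ℝ (Set.Icc (0:ℝ) 1) φ := by
    have hint : interior (Set.Icc (0:ℝ) 1) = Set.Ioo 0 1 := interior_Icc
    refine concaveOn_of_hasDerivWithinAt2_nonpos (f' := fun t => α*(1+t)^(α-1) - α*t^(α-1))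
      (f'' := fun t => α*(α-1)*(1+t)^(α-2) - α*(α-1)*t^(α-2))
      (convex_Icc 0 1) ?_ ?_ ?_ ?_
    · apply ContinuousOn.sub
      · exact ((continuous_const.add continuous_id).rpow_const
          (fun x => Or.inr (by linarith))).continuousOn
      · exact (continuous_id.rpow_const (fun x => Or.inr (by linarith))).continuousOn
    · intro t ht
      rw [hint] at ht
      obtain ⟨ht0, ht1⟩ := ht
      have h1 : HasDerivAt (fun t : ℝ => (1+t)^α) (α*(1+t)^(α-1)) t := by
        have hb : HasDerivAt (fun t : ℝ => 1+t) 1 t := by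
          simpa using (hasDerivAt_id t).const_add (1:ℝ)
        have := (Real.hasDerivAt_rpow_const (x := 1+t) (p := α)
          (Or.inl (by positivity))).comp t hb
        simpa [mul_comm, Function.comp_def] using this
      have h2 : HasDerivAt (fun t : ℝ => t^α) (α*t^(α-1)) t :=
        Real.hasDerivAt_rpow_const (Or.inl (ne_of_gt ht0))
      exact ((h1.sub h2).hasDerivWithinAt)
    · intro t ht
      rw [hint] at ht
      obtain ⟨ht0, ht1⟩ := ht
      have h1 : HasDerivAt (fun t : ℝ => α*(1+t)^(α-1)) (α*((α-1)*(1+t)^(α-1-1))) t := by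
        have hb : HasDerivAt (fun t : ℝ => 1+t) 1 t := by
          simpa using (hasDerivAt_id t).const_add (1:ℝ)
        have := ((Real.hasDerivAt_rpow_const (x := 1+t) (p := α-1)
          (Or.inl (by positivity))).comp t hb).const_mul α
        simpa [mul_comm, mul_assoc] using this
      have h2 : HasDerivAt (fun t : ℝ => α*t^(α-1)) (α*((α-1)*t^(α-1-1))) t :=
        (Real.hasDerivAt_rpow_const (Or.inl (ne_of_gt ht0))).const_mul α
      have h3 := (h1.sub h2).hasDerivWithinAt (s := interior (Set.Icc (0:ℝ) 1))
      refine h3.congr_deriv ?_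
      ring_nf
    · intro t ht
      rw [hint] at ht
      obtain ⟨ht0, ht1⟩ := ht
      have hle : (1+t)^(α-2) ≤ t^(α-2) :=
        Real.rpow_le_rpow_of_nonpos ht0 (by linarith) (by linarith)
      have hnn : 0 ≤ α*(α-1) := mul_nonneg (by linarith) (by linarith)
      nlinarith [mul_le_mul_of_nonneg_left hle hnn]
  have key := hconc.2 (Set.mem_Icc.mpr ⟨le_refl 0, zero_le_one⟩)
    (Set.mem_Icc.mpr ⟨zero_le_one, le_refl 1⟩) (by linarith : (0:ℝ) ≤ 1 - s) hs0
    (by ring : (1:ℝ) - s + s = 1)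
  simp only [smul_eq_mul, mul_zero, mul_one, zero_add] at key
  have hφ0 : φ 0 = 1 := by
    simp [hφ, Real.zero_rpow (by linarith : α ≠ 0), Real.one_rpow]
  have hφ1 : φ 1 = 2^α - 1 := by
    norm_num [hφ]
  rw [hφ0, hφ1] at key
  have : φ s = (1+s)^α - s^α := rfl
  rw [this] at key
  nlinarith [key]

lemma lemA (A h a : ℝ) (hA2 : 2 ≤ A) (hA4 : A ≤ 4) (h0 : 0 ≤ h) (hh : h ≤ 1/2)
    (ha : 0 ≤ a) (ha2 : a ≤ 1/2) :
    2 * max 0 (h/2 - (1/2 - a)) - 2 * max 0 (h/2 - a) + A * max 0 (h/2 - a)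
      ≤ max 0 (h - 2 * min a (1/2 - a)) := by
  rcases le_or_gt a (1/2 - a) with hm | hm
  · rw [min_eq_left hm]
    rcases le_or_gt (h/2) a with hc | hc
    · rw [max_eq_left (by linarith : h/2 - (1/2 - a) ≤ (0:ℝ)),
        max_eq_left (by linarith : h/2 - a ≤ (0:ℝ))]
      refine le_trans (by norm_num) (le_max_left _ _)
    · rw [max_eq_left (by linarith : h/2 - (1/2 - a) ≤ (0:ℝ)),
        max_eq_right (by linarith : (0:ℝ) ≤ h/2 - a)]
      refine le_trans ?_ (le_max_right _ _)
      nlinarith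
  · rw [min_eq_right hm.le]
    rcases le_or_gt (h/2) (1/2 - a) with hc | hc
    · rw [max_eq_left (by linarith : h/2 - (1/2 - a) ≤ (0:ℝ)),
        max_eq_left (by linarith : h/2 - a ≤ (0:ℝ))]
      refine le_trans (by norm_num) (le_max_left _ _)
    · rw [max_eq_right (by linarith : (0:ℝ) ≤ h/2 - (1/2 - a)),
        max_eq_left (by linarith : h/2 - a ≤ (0:ℝ))]
      refine le_trans ?_ (le_max_right _ _)
      nlinarith

lemma lemB (A h a H S : ℝ) (hA2 : 2 ≤ A) (hA4 : A ≤ 4) (hh : 1/2 ≤ h) (h1 : h ≤ 1)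
    (ha : 0 ≤ a) (ha2 : a ≤ 1/2) (hS : 0 ≤ S)
    (hQ : 1 + S + (A - 2) * (2*h - 1) ≤ A * H) :
    2 * max 0 (h/2 - (1/2 - a)) - 2 * max 0 (h/2 - a)
      + (8 * min a (1/2 - a) - 1) / A + A * max 0 (h/2 - a) + S / A - H
      ≤ max 0 (h - 1 + 2 * min a (1/2 - a)) := by
  have hA0 : (0:ℝ) < A := by linarith
  rcases le_or_gt a (1/2 - a) with hm | hm
  · rw [min_eq_left hm, max_eq_right (by linarith : (0:ℝ) ≤ h/2 - a)]
    rcases le_or_gt (h/2 - (1/2 - a)) 0 with hc | hc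
    · rw [max_eq_left hc, max_eq_left (by linarith : h - 1 + 2*a ≤ (0:ℝ))]
      refine le_of_mul_le_mul_left ?_ hA0
      have e : A * (2 * 0 - 2 * (h/2 - a) + (8 * a - 1) / A + A * (h/2 - a) + S / A - H)
          = -2*A*(h/2 - a) + (8*a - 1) + A^2*(h/2 - a) + S - A*H := by
        field_simp; ring
      rw [e, mul_zero]
      nlinarith [mul_nonneg (mul_nonneg (by linarith : (0:ℝ) ≤ 4 - A)
          (by linarith : (0:ℝ) ≤ A + 2)) (by linarith : (0:ℝ) ≤ 1/4 - a),
        mul_nonneg (mul_nonneg (by linarith : (0:ℝ) ≤ A - 2)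
          (by linarith : (0:ℝ) ≤ 4 - A)) (by linarith : (0:ℝ) ≤ h - 1/2)]
    · rw [max_eq_right hc.le, max_eq_right (by linarith : (0:ℝ) ≤ h - 1 + 2*a)]
      refine le_of_mul_le_mul_left ?_ hA0
      have e : A * (2 * (h/2 - (1/2 - a)) - 2 * (h/2 - a) + (8 * a - 1) / A + A * (h/2 - a) + S / A - H)
          = 2*A*(h/2 - (1/2 - a)) - 2*A*(h/2 - a) + (8*a - 1) + A^2*(h/2 - a) + S - A*H := by
        field_simp
      rw [e]
      nlinarith [mul_nonneg (mul_nonneg (by linarith : (0:ℝ) ≤ 4 - A)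
          (by linarith : (0:ℝ) ≤ A + 2)) (by linarith : (0:ℝ) ≤ 1/4 - a),
        mul_nonneg (mul_nonneg (by linarith : (0:ℝ) ≤ A - 2)
          (by linarith : (0:ℝ) ≤ 4 - A)) (by linarith : (0:ℝ) ≤ h - 1/2)]
  · rw [min_eq_right hm.le, max_eq_right (by linarith : (0:ℝ) ≤ h/2 - (1/2 - a))]
    rcases le_or_gt (h/2 - a) 0 with hc | hc
    · rw [max_eq_left hc, max_eq_left (by linarith : h - 1 + 2*(1/2 - a) ≤ (0:ℝ))]
      refine le_of_mul_le_mul_left ?_ hA0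
      have e : A * (2 * (h/2 - (1/2 - a)) - 2 * 0 + (8 * (1/2 - a) - 1) / A + A * 0 + S / A - H)
          = 2*A*(h/2 - (1/2 - a)) + (8*(1/2 - a) - 1) + S - A*H := by
        field_simp; ring
      rw [e, mul_zero]
      nlinarith [mul_nonneg (by linarith : (0:ℝ) ≤ 4 - A) (by linarith : (0:ℝ) ≤ 2*a - h)]
    · rw [max_eq_right hc.le, max_eq_right (by linarith : (0:ℝ) ≤ h - 1 + 2*(1/2 - a))]
      refine le_of_mul_le_mul_left ?_ hA0
      have e : A * (2 * (h/2 - (1/2 - a)) - 2 * (h/2 - a) + (8 * (1/2 - a) - 1) / A + A * (h/2 - a) + S / A - H)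
          = 2*A*(h/2 - (1/2 - a)) - 2*A*(h/2 - a) + (8*(1/2 - a) - 1) + A^2*(h/2 - a) + S - A*H := by
        field_simp
      rw [e]
      have hfac : (0:ℝ) ≤ A * (h/2 - a) - 2*(1/2 - a) + 1 - h := by nlinarith
      nlinarith [mul_nonneg (by linarith : (0:ℝ) ≤ 4 - A) hfac]

noncomputable def Wf (x y : ℝ) : ℝ := max 0 (|y - x|/2 - di ((x+y)/2))
noncomputable def Gf (α x y : ℝ) : ℝ :=
  takagi α ((x+y)/2) - (takagi α x + takagi α y)/2 - |y - x| ^ α + (2:ℝ)^α * Wf x y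

section
variable {α : ℝ}

lemma A_ge_two (hα1 : 1 ≤ α) : (2:ℝ) ≤ (2:ℝ)^α := by
  calc (2:ℝ) = (2:ℝ)^(1:ℝ) := (Real.rpow_one 2).symm
  _ ≤ (2:ℝ)^α := Real.rpow_le_rpow_of_exponent_le (by norm_num) hα1

lemma A_le_four (hα2 : α ≤ 2) : (2:ℝ)^α ≤ 4 := by
  calc (2:ℝ)^α ≤ (2:ℝ)^(2:ℝ) := Real.rpow_le_rpow_of_exponent_le (by norm_num) hα2
  _ = 4 := by
      rw [show ((2:ℝ):ℝ) = ((2:ℕ):ℝ) by norm_num, Real.rpow_natCast]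
      norm_num

lemma r_eq_inv : (2:ℝ)^(-α) = ((2:ℝ)^α)⁻¹ := by
  rw [Real.rpow_neg (by norm_num)]

lemma rA_one : (2:ℝ)^(-α) * (2:ℝ)^α = 1 := by
  rw [← Real.rpow_add (by norm_num)]; simp

lemma Gf_comm (x y : ℝ) : Gf α x y = Gf α y x := by
  unfold Gf Wf
  rw [abs_sub_comm y x, add_comm x y, add_comm (takagi α x)]

lemma Wf_nonneg (x y : ℝ) : 0 ≤ Wf x y := le_max_left _ _

lemma Gf_le_four (hα1 : 1 ≤ α) (hα2 : α ≤ 2) (x y : ℝ) (hxy : |y - x| ≤ 1) :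
    Gf α x y ≤ 4 := by
  unfold Gf
  have h1 := takagi_le_two hα1 ((x+y)/2)
  have h2 := takagi_nonneg hα1 x
  have h3 := takagi_nonneg hα1 y
  have h4 : (0:ℝ) ≤ |y - x| ^ α := Real.rpow_nonneg (abs_nonneg _) _
  have h5 : Wf x y ≤ 1/2 := by
    unfold Wf
    refine max_le (by norm_num) (by linarith [di_nonneg ((x+y)/2)])
  have h6 : 0 ≤ Wf x y := Wf_nonneg x y
  have h7 := A_le_four hα2
  have h8 : (0:ℝ) ≤ (2:ℝ)^α := by linarith [A_ge_two hα1]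
  nlinarith [mul_le_mul_of_nonneg_left h5 h8]

lemma step (hα1 : 1 ≤ α) (hα2 : α ≤ 2) (x y : ℝ) (hxy : x ≤ y) (hd : y - x ≤ 1) :
    ∃ x' y', |y' - x'| ≤ 1 ∧ Gf α x y ≤ (2:ℝ)^(-α) * Gf α x' y' := by
  obtain ⟨A, hA⟩ : ∃ A, A = (2:ℝ)^α := ⟨_, rfl⟩
  obtain ⟨r, hr⟩ : ∃ r, r = (2:ℝ)^(-α) := ⟨_, rfl⟩
  obtain ⟨h, hdef⟩ : ∃ h, h = y - x := ⟨_, rfl⟩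
  obtain ⟨m, hm⟩ : ∃ m, m = (x + y)/2 := ⟨_, rfl⟩
  obtain ⟨a, ha⟩ : ∃ a, a = di m := ⟨_, rfl⟩
  have h0 : 0 ≤ h := by rw [hdef]; linarith
  have hd' : h ≤ 1 := by rw [hdef]; linarith
  have ha0 : 0 ≤ a := ha ▸ di_nonneg m
  have ha2 : a ≤ 1/2 := ha ▸ di_le_half m
  have hA2 : (2:ℝ) ≤ A := hA ▸ A_ge_two hα1
  have hA4 : A ≤ 4 := hA ▸ A_le_four hα2
  have hr0 : 0 < r := hr ▸ Real.rpow_pos_of_pos (by norm_num) _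
  have hrA : r * A = 1 := by rw [hr, hA]; exact rA_one
  have habs : |y - x| = h := by rw [hdef]; exact abs_of_nonneg (by rw [hdef] at h0; linarith)
  have hxm : x = m - h/2 := by rw [hm, hdef]; ring
  have hym : y = m + h/2 := by rw [hm, hdef]; ring
  have hpsi : tent m - (tent x + tent y)/2
      = 2 * max 0 (h/2 - (1/2 - a)) - 2 * max 0 (h/2 - a) := by
    rw [tent_eq, tent_eq, tent_eq, hxm, hym, ha, ← psi0 m h h0 hd']
    ring
  have h2m : (2*x + 2*y)/2 = 2*m := by rw [hm]; ring
  have hdd : di (2*m) = 2 * min a (1/2 - a) := by rw [ha]; exact di_double m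
  have hmul : r * ((2*h) ^ α) = h ^ α := by
    rw [hr, Real.mul_rpow (by norm_num : (0:ℝ) ≤ 2) h0, ← mul_assoc, rA_one, one_mul]
  rcases le_or_gt h (1/2) with hc | hc
  · -- double
    have hab2 : |2*y - 2*x| = 2*h := by
      rw [show 2*y - 2*x = 2*h by rw [hdef]; ring]; exact abs_of_nonneg (by linarith)
    refine ⟨2*x, 2*y, by rw [hab2]; linarith, ?_⟩
    have hW2 : Wf (2*x) (2*y) = max 0 (h - 2 * min a (1/2 - a)) := by
      unfold Wf
      rw [h2m, hdd, hab2]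
      ring_nf
    have hW1 : Wf x y = max 0 (h/2 - a) := by
      unfold Wf; rw [habs, ← hm, ← ha]
    have key := lemA A h a hA2 hA4 h0 hc ha0 ha2
    unfold Gf
    rw [hW1, hW2, habs, hab2, h2m, ← hm, ← hA, ← hr]
    have expand : takagi α m - (takagi α x + takagi α y)/2
        = (2 * max 0 (h/2 - (1/2 - a)) - 2 * max 0 (h/2 - a))
          + r * (takagi α (2*m) - (takagi α (2*x) + takagi α (2*y))/2) := by
      rw [← hpsi, takagi_funeq hα1 m, takagi_funeq hα1 x, takagi_funeq hα1 y, ← hr]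
      ring
    have hdist : r * (takagi α (2*m) - (takagi α (2*x) + takagi α (2*y))/2 - (2*h)^α
          + A * max 0 (h - 2 * min a (1/2 - a)))
        = r * (takagi α (2*m) - (takagi α (2*x) + takagi α (2*y))/2) - h^α
          + max 0 (h - 2 * min a (1/2 - a)) := by
      rw [mul_add, mul_sub, hmul, ← mul_assoc, hrA, one_mul]
    rw [hdist]
    linarith [expand, key]
  · -- double and shift
    have hab2 : |2*y - 1 - 2*x| = 2*h - 1 := by
      rw [show 2*y - 1 - 2*x = 2*h - 1 by rw [hdef]; ring]
      exact abs_of_nonneg (by linarith)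
    refine ⟨2*x, 2*y - 1, by rw [hab2]; linarith, ?_⟩
    obtain ⟨t, ht⟩ : ∃ t, t = min a (1/2 - a) := ⟨_, rfl⟩
    have htent2m : tent (2*m) = 4 * t := by rw [tent_eq, hdd, ht]; ring
    have hmid2 : (2*x + (2*y - 1))/2 = 2*m - 1/2 := by rw [hm]; ring
    have hdi2 : di (2*m - 1/2) = 1/2 - 2*t := by
      have e := di_add_half (2*m - 1)
      rw [show 2*m - 1 + 1/2 = 2*m - 1/2 by ring] at e
      have e' : di (2*m - 1) = di (2*m) := by
        have e2 := di_int_add (2*m - 1) 1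
        rw [show 2*m - 1 + ((1:ℤ):ℝ) = 2*m by push_cast; ring] at e2
        exact e2.symm
      rw [e, e', hdd, ht]
    have hW2 : Wf (2*x) (2*y - 1) = max 0 (h - 1 + 2*t) := by
      unfold Wf
      rw [hmid2, hdi2, hab2]
      ring_nf
    have hW1 : Wf x y = max 0 (h/2 - a) := by
      unfold Wf; rw [habs, ← hm, ← ha]
    obtain ⟨S, hS⟩ : ∃ S, S = (2*h - 1) ^ α := ⟨_, rfl⟩
    obtain ⟨H, hH⟩ : ∃ H, H = h ^ α := ⟨_, rfl⟩
    have hS0 : 0 ≤ S := hS ▸ Real.rpow_nonneg (by linarith) _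
    have hQ : 1 + S + (A - 2) * (2*h - 1) ≤ A * H := by
      have q := lemQ hα1 hα2 (s := 2*h - 1) (by linarith) (by linarith)
      rw [show (1:ℝ) + (2*h - 1) = 2*h by ring] at q
      have e3 : ((2:ℝ)*h) ^ α = A * H := by
        rw [Real.mul_rpow (by norm_num : (0:ℝ) ≤ 2) h0, hA, hH]
      rw [e3] at q
      rw [← hS, ← hA] at q
      linarith
    have key := lemB A h a H S hA2 hA4 hc.le hd' ha0 ha2 hS0 hQ
    rw [← ht] at key
    have eper : takagi α (2*y - 1) = takagi α (2*y) := by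
      have e2 := takagi_int_add (α := α) (2*y - 1) 1
      rw [show 2*y - 1 + ((1:ℤ):ℝ) = 2*y by push_cast; ring] at e2
      exact e2.symm
    have ehalf := takagi_sub_half hα1 (2*m)
    unfold Gf
    rw [hW1, hW2, habs, hab2, hmid2, ← hm, ← hA, ← hr, ← hS, ← hH]
    have expand : takagi α m - (takagi α x + takagi α y)/2
        = (2 * max 0 (h/2 - (1/2 - a)) - 2 * max 0 (h/2 - a))
          + r * (2 * (4*t) - 1)
          + r * (takagi α (2*m - 1/2) - (takagi α (2*x) + takagi α (2*y - 1))/2) := by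
      rw [← htent2m, ← hpsi, takagi_funeq hα1 m, takagi_funeq hα1 x, takagi_funeq hα1 y,
        ← hr, eper]
      have e4 : takagi α (2*m) = takagi α (2*m - 1/2) + (2 * tent (2*m) - 1) := by
        linarith [ehalf]
      rw [e4]
      ring
    have hrdiv : ∀ z : ℝ, r * z = z / A := by
      intro z
      rw [eq_div_iff (by linarith : A ≠ 0), mul_assoc, mul_comm z A, ← mul_assoc, hrA,
        one_mul]
    have hexp2 : r * (2 * (4*t) - 1) = (8*t - 1)/A := by
      rw [hrdiv]; ring_nf
    have hexpS : r * S = S / A := hrdiv S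
    have hmulS : r * ((2*h - 1) ^ α) = S / A := by rw [← hS]; exact hexpS
    have hdist : r * (takagi α (2*m - 1/2) - (takagi α (2*x) + takagi α (2*y - 1))/2
          - S + A * max 0 (h - 1 + 2*t))
        = r * (takagi α (2*m - 1/2) - (takagi α (2*x) + takagi α (2*y - 1))/2) - S/A
          + max 0 (h - 1 + 2*t) := by
      rw [mul_add, mul_sub, hexpS, ← mul_assoc, hrA, one_mul]
    rw [hdist]
    linarith [expand, key, hexp2]
lemma Gf_nonpos (hα1 : 1 ≤ α) (hα2 : α ≤ 2) (x y : ℝ) (hxy : |y - x| ≤ 1) :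
    Gf α x y ≤ 0 := by
  set SS : Set ℝ := {z | ∃ a b : ℝ, |b - a| ≤ 1 ∧ z = Gf α a b} with hSS
  have hmemxy : Gf α x y ∈ SS := ⟨x, y, hxy, rfl⟩
  have hne : SS.Nonempty := ⟨Gf α x y, hmemxy⟩
  have hbdd : BddAbove SS := by
    refine ⟨4, ?_⟩
    rintro z ⟨a, b, hab, rfl⟩
    exact Gf_le_four hα1 hα2 a b hab
  set g := sSup SS with hg
  have hr0 : (0:ℝ) < (2:ℝ)^(-α) := Real.rpow_pos_of_pos (by norm_num) _
  have hrh : (2:ℝ)^(-α) ≤ 1/2 := by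
    calc (2:ℝ)^(-α) ≤ (2:ℝ)^(-1:ℝ) :=
      Real.rpow_le_rpow_of_exponent_le (by norm_num) (by linarith)
    _ = 1/2 := by rw [Real.rpow_neg_one]; norm_num
  have hstep : ∀ z ∈ SS, z ≤ (2:ℝ)^(-α) * g := by
    rintro z ⟨a, b, hab, rfl⟩
    have hmain : ∃ x' y', |y' - x'| ≤ 1 ∧ Gf α a b ≤ (2:ℝ)^(-α) * Gf α x' y' := by
      rcases le_total a b with hab' | hab'
      · exact step hα1 hα2 a b hab' (by rw [abs_of_nonneg (by linarith)] at hab; linarith)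
      · rw [Gf_comm]
        exact step hα1 hα2 b a hab' (by rw [abs_sub_comm, abs_of_nonneg (by linarith)] at hab; linarith)
    obtain ⟨x', y', h1, h2⟩ := hmain
    refine h2.trans (mul_le_mul_of_nonneg_left ?_ hr0.le)
    exact le_csSup hbdd ⟨x', y', h1, rfl⟩
  have hgle : g ≤ (2:ℝ)^(-α) * g := csSup_le hne hstep
  have hg0 : g ≤ 0 := by nlinarith
  exact (le_csSup hbdd hmemxy).trans hg0

end

theorem takagi_approx_convex (α : ℝ) (hα1 : 1 ≤ α) (hα2 : α ≤ 2)
    (x y : ℝ) (hx : x ∈ Set.Icc (0:ℝ) 1) (hy : y ∈ Set.Icc (0:ℝ) 1) :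
    takagi α ((x + y) / 2) ≤ (takagi α x + takagi α y) / 2 + |x - y| ^ α := by
  obtain ⟨hx0, hx1⟩ := hx
  obtain ⟨hy0, hy1⟩ := hy
  have hd : |y - x| ≤ 1 := by rw [abs_le]; constructor <;> linarith
  have h := Gf_nonpos hα1 hα2 x y hd
  unfold Gf at h
  have hW : 0 ≤ (2:ℝ)^α * Wf x y :=
    mul_nonneg (by positivity) (Wf_nonneg x y)
  rw [abs_sub_comm x y]
  linarith
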